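/- Every finite simple graph H on n vertices with girth at least 2δ+1 (for an integer δ ≥ 1) has at most 2·n^(1+1/δ) edges. -/

import Mathlib

open SimpleGraph Finset

set_option linter.unusedSectionVars false

namespace GirthSparsityAux

variable {V : Type*} [DecidableEq V]

lemma eq_getVert_one_of_edge {G : SimpleGraph V} {u z w : V} {r : G.Walk u z}
    (hr : r.IsPath) (he : s(u, w) ∈ r.edges) : w = r.getVert 1 := by
  cases r with
  | nil => simp at he
  | @cons _ x _ h r' =>
    rw [Walk.edges_cons, List.mem_cons] at he
    rcases he with he | he
    · have hx : w = x := Sym2.congr_right.mp he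
      simp [hx, Walk.getVert_cons_succ, Walk.getVert_zero]
    · exact absurd (Walk.fst_mem_support_of_mem_edges r' he)
        ((Walk.cons_isPath_iff h r').mp hr).2

lemma exists_cycle_of_two_paths {G : SimpleGraph V} :
    ∀ (N : ℕ) {v u : V} (p q : G.Walk v u), p.length + q.length ≤ N →
      p.IsPath → q.IsPath → p ≠ q →
      ∃ (w : V) (c : G.Walk w w), c.IsCycle ∧ c.length ≤ p.length + q.length := by
  intro N
  induction N with
  | zero =>
    intro v u p q hN hp hq hne
    cases p with
    | nil => exact (hne ((Walk.isPath_iff_eq_nil (p := q)).mp hq).symm).elim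
    | cons h p' => simp [Walk.length_cons] at hN
  | succ N ih =>
    intro v u p q hN hp hq hne
    cases p with
    | nil => exact (hne ((Walk.isPath_iff_eq_nil (p := q)).mp hq).symm).elim
    | @cons _ x _ h p' =>
      cases q with
      | nil =>
        have := Walk.isPath_iff_eq_nil.mp hp
        simp at this
      | @cons _ y _ h2 q' =>
        by_cases hxy : x = y
        · subst hxy
          have hne' : p' ≠ q' := by
            rintro rfl
            exact hne rfl
          obtain ⟨w, c, hc, hlen⟩ := ih p' q'
            (by simp only [Walk.length_cons] at hN; omega)
            hp.of_cons hq.of_cons hne'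
          exact ⟨w, c, hc, by simp only [Walk.length_cons]; omega⟩
        · set W : G.Walk x v := p'.append (Walk.cons h2 q').reverse with hW
          have hedge : s(v, x) ∉ W.bypass.edges := by
            intro he
            have hWe := Walk.edges_bypass_subset W he
            rw [hW, Walk.edges_append, Walk.edges_reverse, List.mem_append,
              List.mem_reverse, Walk.edges_cons, List.mem_cons] at hWe
            rcases hWe with hWe | hWe | hWe
            · exact ((Walk.cons_isPath_iff h p').mp hp).2
                (Walk.fst_mem_support_of_mem_edges p' hWe)
            · exact hxy (Sym2.congr_right.mp hWe)
            · exact ((Walk.cons_isPath_iff h2 q').mp hq).2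
                (Walk.fst_mem_support_of_mem_edges q' hWe)
          have hcyc : (Walk.cons h W.bypass).IsCycle :=
            (Walk.cons_isCycle_iff _ h).mpr ⟨W.bypass_isPath, hedge⟩
          refine ⟨v, Walk.cons h W.bypass, hcyc, ?_⟩
          have hlb := Walk.length_bypass_le W
          have hWl : W.length = p'.length + (q'.length + 1) := by
            rw [hW]; simp [Walk.length_append, Walk.length_reverse, Walk.length_cons]
          simp only [Walk.length_cons]
          omega

lemma cycle_length_lb {G : SimpleGraph V} {δ : ℕ}
    (hg : (2 * δ + 1 : ℕ∞) ≤ G.egirth) {w : V} {c : G.Walk w w} (hc : c.IsCycle) :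
    2 * δ + 1 ≤ c.length := by
  have h := SimpleGraph.le_egirth.mp hg w c hc
  exact_mod_cast h

/-- chord lemma : a neighbor of the start of a short path which is not the second
vertex cannot be on the path, given large girth. -/
lemma not_mem_support_of_adj {G : SimpleGraph V} {δ : ℕ}
    (hg : (2 * δ + 1 : ℕ∞) ≤ G.egirth) {u v₀ w : V} {p : G.Walk u v₀}
    (hp : p.IsPath) (hlen : p.length + 1 ≤ 2 * δ) (hadj : G.Adj w u)
    (hw1 : w ≠ p.getVert 1) : w ∉ p.support := by
  intro hw
  have hr : (p.takeUntil w hw).IsPath := hp.takeUntil hw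
  have hedge : s(w, u) ∉ (p.takeUntil w hw).edges := by
    intro he
    have := Walk.edges_takeUntil_subset p hw he
    rw [Sym2.eq_swap] at this
    exact hw1 (eq_getVert_one_of_edge hp this)
  have hcyc : (Walk.cons hadj (p.takeUntil w hw)).IsCycle :=
    (Walk.cons_isCycle_iff _ hadj).mpr ⟨hr, hedge⟩
  have hlb := cycle_length_lb hg hcyc
  have hub := Walk.length_takeUntil_le p hw
  rw [Walk.length_cons] at hlb
  omega


/-- Paths (as walks) of length `k` ending at `v₀`, bundled with their start vertex. -/
private def PathsTo (G : SimpleGraph V) (v₀ : V) (k : ℕ) : Type _ :=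
  Σ u : V, {q : G.Walk u v₀ // q.length = k ∧ q.IsPath}

noncomputable instance pathsToFintype [Fintype V] {G : SimpleGraph V} [DecidableRel G.Adj]
    {v₀ : V} {k : ℕ} : Fintype (PathsTo G v₀ k) := by
  unfold PathsTo
  haveI : ∀ u : V, Fintype {q : G.Walk u v₀ // q.length = k ∧ q.IsPath} := fun u => by
    apply Fintype.ofInjective (β := {q : G.Walk u v₀ // q.length = k})
      (fun p => ⟨p.1, p.2.1⟩)
    intro a b hab
    apply Subtype.ext
    have := congrArg Subtype.val hab
    exact this
  infer_instance

private lemma sigma_eq_helper {G : SimpleGraph V} {v₀ : V} {k : ℕ} {a a' : V} (h : a = a')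
    (q : G.Walk a v₀) (q' : G.Walk a' v₀) (hq : q.copy h rfl = q')
    {pf : q.length = k ∧ q.IsPath} {pf' : q'.length = k ∧ q'.IsPath} :
    (⟨a, ⟨q, pf⟩⟩ : PathsTo G v₀ k) = ⟨a', ⟨q', pf'⟩⟩ := by
  subst h
  rw [Walk.copy_rfl_rfl] at hq
  subst hq
  rfl

lemma girth_core [Fintype V] (G : SimpleGraph V) [DecidableRel G.Adj] (δ d : ℕ) (hδ : 1 ≤ δ) (hd : 2 ≤ d)
    (hg : (2 * δ + 1 : ℕ∞) ≤ G.egirth) (v₀ : V)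
    (hdeg : ∀ ⦃a b : V⦄, G.Adj a b → d ≤ G.degree a)
    (hv₀ : d ≤ G.degree v₀) :
    d * (d - 1) ^ (δ - 1) ≤ Fintype.card V := by
  classical
  -- Step A : paths of length δ inject into V via their start vertex
  have hA : Fintype.card (PathsTo G v₀ δ) ≤ Fintype.card V := by
    apply Fintype.card_le_of_injective (fun x => x.1)
    rintro ⟨u, p, hp⟩ ⟨u', q, hq⟩ h
    dsimp at h
    subst h
    by_contra hne
    have hpq : p ≠ q := by
      intro h'
      subst h'
      exact hne rfl
    obtain ⟨w, c, hc, hlen⟩ := exists_cycle_of_two_paths (p.length + q.length) p q le_rfl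
      hp.2 hq.2 hpq
    have hlb := cycle_length_lb hg hc
    have e1 := hp.1
    have e2 := hq.1
    omega
  -- Step B : at least d paths of length 1
  have hB : d ≤ Fintype.card (PathsTo G v₀ 1) := by
    let emb : G.neighborSet v₀ → PathsTo G v₀ 1 := fun w =>
      ⟨(w : V), ⟨Walk.cons (G.adj_symm w.2) Walk.nil, by simp, by
        refine Walk.IsPath.nil.cons ?_
        simp [(G.adj_symm w.2).ne]⟩⟩
    have hinj : Fintype.card (G.neighborSet v₀) ≤ Fintype.card (PathsTo G v₀ 1) := by
      apply Fintype.card_le_of_injective emb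
      intro a b hab
      apply Subtype.ext
      have := congrArg Sigma.fst hab
      exact this
    rw [G.card_neighborSet_eq_degree] at hinj
    omega
  -- Step C : growth of the number of paths
  have hC : ∀ k : ℕ, 1 ≤ k → k + 1 ≤ δ →
      (d - 1) * Fintype.card (PathsTo G v₀ k) ≤ Fintype.card (PathsTo G v₀ (k + 1)) := by
    intro k hk1 hkδ
    have hnil : ∀ x : PathsTo G v₀ (k + 1), ¬ x.2.1.Nil := by
      intro x
      rw [Walk.nil_iff_length_eq, x.2.2.1]
      omega
    -- the "remove the first edge" map
    set f : PathsTo G v₀ (k + 1) → PathsTo G v₀ k := fun x =>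
      ⟨x.2.1.getVert 1, ⟨x.2.1.tail, by
        have h1 := Walk.length_tail_add_one (hnil x)
        have h2 := x.2.2.1
        omega, x.2.2.2.tail⟩⟩ with hf
    have key := Finset.card_eq_sum_card_fiberwise
      (s := (univ : Finset (PathsTo G v₀ (k + 1)))) (t := (univ : Finset (PathsTo G v₀ k)))
      (f := f) (fun x _ => mem_univ _)
    have hfiber : ∀ b : PathsTo G v₀ k,
        d - 1 ≤ ((univ : Finset (PathsTo G v₀ (k + 1))).filter fun x => f x = b).card := by
      rintro ⟨u, p, hlp, hpp⟩
      have hadj0 : G.Adj u (p.getVert 1) := by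
        have := p.adj_getVert_succ (i := 0) (by rw [hlp]; omega)
        simpa [Walk.getVert_zero] using this
      have hdegu : d ≤ G.degree u := hdeg hadj0
      have hcard : d - 1 ≤ (G.neighborFinset u \ {p.getVert 1}).card := by
        have h1 := Finset.card_le_card_sdiff_add_card
          (s := G.neighborFinset u) (t := ({p.getVert 1} : Finset V))
        rw [Finset.card_singleton, G.card_neighborFinset_eq_degree] at h1
        omega
      refine le_trans hcard (Finset.card_le_card_of_surjOn Sigma.fst ?_)
      intro w hw
      simp only [Finset.coe_sdiff, Set.mem_diff, Finset.coe_singleton, Set.mem_singleton_iff,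
        Finset.mem_coe, mem_neighborFinset] at hw
      obtain ⟨hw1, hw2⟩ := hw
      have hadjw : G.Adj w u := (G.adj_symm hw1)
      have hwns : w ∉ p.support := by
        refine not_mem_support_of_adj hg hpp ?_ hadjw hw2
        omega
      have hpath : (Walk.cons hadjw p).IsPath := hpp.cons hwns
      refine ⟨(⟨w, ⟨Walk.cons hadjw p, by simp [Walk.length_cons, hlp], hpath⟩⟩ :
        PathsTo G v₀ (k + 1)), ?_, rfl⟩
      simp only [Finset.coe_filter, Set.mem_setOf_eq, Finset.mem_univ, true_and, hf]
      refine sigma_eq_helper (by simp [Walk.getVert_cons_succ, Walk.getVert_zero]) _ _ ?_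
      rw [Walk.tail_cons]
      exact (Walk.copy_copy _ _ _ _ _).trans (Walk.copy_rfl_rfl p)
    calc (d - 1) * Fintype.card (PathsTo G v₀ k)
        = ∑ _b ∈ (univ : Finset (PathsTo G v₀ k)), (d - 1) := by
          rw [Finset.sum_const, Finset.card_univ, smul_eq_mul, mul_comm]
      _ ≤ ∑ b ∈ (univ : Finset (PathsTo G v₀ k)),
            ((univ : Finset (PathsTo G v₀ (k + 1))).filter fun x => f x = b).card :=
          Finset.sum_le_sum fun b _ => hfiber b
      _ = Fintype.card (PathsTo G v₀ (k + 1)) := by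
          rw [← key, Finset.card_univ]
  -- chain the estimates
  have hchain : ∀ j : ℕ, 1 ≤ j → j ≤ δ →
      d * (d - 1) ^ (j - 1) ≤ Fintype.card (PathsTo G v₀ j) := by
    intro j
    induction j with
    | zero => omega
    | succ j ihj =>
      intro _ hjδ
      rcases Nat.eq_zero_or_pos j with rfl | hj1
      · simpa using hB
      · have hstep := hC j hj1 hjδ
        have hrec := ihj hj1 (by omega)
        have hpow : d * (d - 1) ^ (j + 1 - 1) = (d - 1) * (d * (d - 1) ^ (j - 1)) := by
          have hj : j - 1 + 1 = j := by omega
          rw [Nat.add_sub_cancel]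
          conv_lhs => rw [← hj]
          ring
        rw [hpow]
        exact le_trans (Nat.mul_le_mul_left _ hrec) hstep
  exact le_trans (hchain δ hδ le_rfl) hA


lemma degeneracy_bound [Fintype V] (G : SimpleGraph V) [DecidableRel G.Adj] (D : ℝ)
    (hD : 0 ≤ D)
    (h : ∀ S : Finset V, S.Nonempty → ∃ v ∈ S, ((S.filter (G.Adj v)).card : ℝ) ≤ D) :
    (G.edgeFinset.card : ℝ) ≤ D * Fintype.card V := by
  classical
  have main : ∀ (m : ℕ) (S : Finset V), S.card = m →
      (((S ×ˢ S).filter fun p => G.Adj p.1 p.2).card : ℝ) ≤ 2 * D * S.card := by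
    intro m
    induction m with
    | zero =>
      intro S hS
      rw [Finset.card_eq_zero] at hS
      subst hS
      simp
    | succ m ih =>
      intro S hS
      have hne : S.Nonempty := Finset.card_pos.mp (by omega)
      obtain ⟨v, hv, hdegv⟩ := h S hne
      have hcard' : (S.erase v).card = m := by rw [Finset.card_erase_of_mem hv, hS]; omega
      have hsub : (S ×ˢ S).filter (fun p => G.Adj p.1 p.2) ⊆
          (((S.erase v) ×ˢ (S.erase v)).filter fun p => G.Adj p.1 p.2)
            ∪ ({v} ×ˢ (S.filter (G.Adj v)))
            ∪ ((S.filter (G.Adj v)) ×ˢ {v}) := by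
        rintro ⟨a, b⟩ hab
        simp only [Finset.mem_filter, Finset.mem_product, Finset.mem_union,
          Finset.mem_singleton, Finset.mem_erase] at *
        obtain ⟨⟨haS, hbS⟩, hadj⟩ := hab
        rcases eq_or_ne a v with rfl | ha
        · exact Or.inl (Or.inr ⟨rfl, hbS, hadj⟩)
        rcases eq_or_ne b v with rfl | hb
        · exact Or.inr ⟨⟨haS, hadj.symm⟩, rfl⟩
        · exact Or.inl (Or.inl ⟨⟨⟨ha, haS⟩, hb, hbS⟩, hadj⟩)
      have hcle := Finset.card_le_card hsub
      have hu1 := Finset.card_union_le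
        ((((S.erase v) ×ˢ (S.erase v)).filter fun p => G.Adj p.1 p.2)
          ∪ ({v} ×ˢ (S.filter (G.Adj v)))) ((S.filter (G.Adj v)) ×ˢ {v})
      have hu2 := Finset.card_union_le
        (((S.erase v) ×ˢ (S.erase v)).filter fun p => G.Adj p.1 p.2)
        ({v} ×ˢ (S.filter (G.Adj v)))
      have hp1 : (({v} : Finset V) ×ˢ (S.filter (G.Adj v))).card
          = (S.filter (G.Adj v)).card := by
        rw [Finset.card_product, Finset.card_singleton, one_mul]
      have hp2 : ((S.filter (G.Adj v)) ×ˢ ({v} : Finset V)).card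
          = (S.filter (G.Adj v)).card := by
        rw [Finset.card_product, Finset.card_singleton, mul_one]
      have hnat : ((S ×ˢ S).filter fun p => G.Adj p.1 p.2).card ≤
          (((S.erase v) ×ˢ (S.erase v)).filter fun p => G.Adj p.1 p.2).card
            + (S.filter (G.Adj v)).card + (S.filter (G.Adj v)).card := by omega
      have hih := ih (S.erase v) hcard'
      rw [hcard'] at hih
      have hcast : (((S ×ˢ S).filter fun p => G.Adj p.1 p.2).card : ℝ) ≤
          ((((S.erase v) ×ˢ (S.erase v)).filter fun p => G.Adj p.1 p.2).card : ℝ)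
            + (S.filter (G.Adj v)).card + (S.filter (G.Adj v)).card := by
        exact_mod_cast hnat
      rw [hS]
      push_cast
      linarith
  have h2 : ((univ ×ˢ univ).filter fun p : V × V => G.Adj p.1 p.2).card
      = 2 * G.edgeFinset.card := by
    rw [← G.sum_degrees_eq_twice_card_edges]
    rw [Finset.card_eq_sum_card_fiberwise (f := Prod.fst)
      (t := (univ : Finset V)) (fun x _ => mem_univ _)]
    refine Finset.sum_congr rfl fun a _ => ?_
    rw [Finset.filter_filter]
    have hfib : ((univ ×ˢ univ : Finset (V × V)).filter fun p => G.Adj p.1 p.2 ∧ p.1 = a)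
        = {a} ×ˢ G.neighborFinset a := by
      ext ⟨x, y⟩
      simp only [Finset.mem_filter, Finset.mem_product, Finset.mem_univ, true_and,
        Finset.mem_singleton, mem_neighborFinset]
      constructor
      · rintro ⟨hadj, rfl⟩; exact ⟨rfl, hadj⟩
      · rintro ⟨rfl, hadj⟩; exact ⟨hadj, rfl⟩
    rw [hfib, Finset.card_product, Finset.card_singleton, one_mul,
      G.card_neighborFinset_eq_degree]
  have hmain := main (Fintype.card V) univ (by rw [Finset.card_univ])
  rw [h2, Finset.card_univ] at hmain
  push_cast at hmain
  linarith

end GirthSparsityAux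

/-- Every finite simple graph `H` on `n` vertices with girth at least
`2δ+1` (for an integer `δ ≥ 1`) has at most `2 · n^(1+1/δ)` edges. -/
theorem girth_sparsity {V : Type*} [Fintype V] (H : SimpleGraph V) (n δ : ℕ)
    (hn : Fintype.card V = n) (hδ : 1 ≤ δ)
    (hgirth : (2 * δ + 1 : ℕ∞) ≤ H.egirth) :
    (H.edgeSet.ncard : ℝ) ≤ 2 * (n : ℝ) ^ ((1 : ℝ) + 1 / δ) := by
  classical
  open GirthSparsityAux Finset SimpleGraph in
  subst hn
  rcases Nat.eq_zero_or_pos (Fintype.card V) with h0 | hpos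
  · haveI : IsEmpty V := Fintype.card_eq_zero_iff.mp h0
    have he : H.edgeSet = ∅ := by
      rw [Set.eq_empty_iff_forall_notMem]
      intro e
      induction e using Sym2.ind with
      | _ x y => exact fun _ => IsEmpty.false x
    rw [he, Set.ncard_empty, h0]
    simp only [Nat.cast_zero]
    positivity
  · have hδR : (δ : ℝ) ≠ 0 := Nat.cast_ne_zero.mpr (by omega)
    set x : ℝ := (Fintype.card V : ℝ) ^ ((1 : ℝ) / δ) with hx
    set D : ℝ := 2 * x with hD
    have hn1 : (1 : ℝ) ≤ (Fintype.card V : ℝ) := by exact_mod_cast hpos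
    have hnr1 : (1 : ℝ) ≤ x := by
      rw [hx]
      calc (1 : ℝ) = 1 ^ ((1 : ℝ) / δ) := (Real.one_rpow _).symm
        _ ≤ _ := Real.rpow_le_rpow zero_le_one hn1 (by positivity)
    have hD2 : (2 : ℝ) ≤ D := by rw [hD]; nlinarith
    have hD0 : (0 : ℝ) ≤ D := by linarith
    have hedge : (H.edgeSet.ncard : ℝ) = (H.edgeFinset.card : ℝ) := by
      congr 1
      rw [Set.ncard_eq_toFinset_card']
      rfl
    have hnpos : (0 : ℝ) < (Fintype.card V : ℝ) := by exact_mod_cast hpos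
    have hgoal : D * (Fintype.card V : ℝ)
        = 2 * (Fintype.card V : ℝ) ^ ((1 : ℝ) + 1 / δ) := by
      rw [hD, hx, mul_assoc]
      congr 1
      calc (Fintype.card V : ℝ) ^ ((1 : ℝ) / δ) * (Fintype.card V : ℝ)
          = (Fintype.card V : ℝ) ^ ((1 : ℝ) / δ) * (Fintype.card V : ℝ) ^ (1 : ℝ) := by
            rw [Real.rpow_one]
        _ = (Fintype.card V : ℝ) ^ ((1 : ℝ) / δ + 1) := (Real.rpow_add hnpos _ _).symm
        _ = (Fintype.card V : ℝ) ^ ((1 : ℝ) + 1 / δ) := by ring_nf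
    by_cases hP : ∀ S : Finset V, S.Nonempty →
        ∃ v ∈ S, ((S.filter (H.Adj v)).card : ℝ) ≤ D
    · have hb := GirthSparsityAux.degeneracy_bound H D hD0 hP
      rw [hedge, ← hgoal]
      exact hb
    · push_neg at hP
      obtain ⟨S, hSne, hS⟩ := hP
      exfalso
      let G' : SimpleGraph V :=
        { Adj := fun a b => H.Adj a b ∧ a ∈ S ∧ b ∈ S
          symm := ⟨by intro a b hab; exact ⟨hab.1.symm, hab.2.2, hab.2.1⟩⟩
          loopless := ⟨fun a ha => H.loopless.irrefl a ha.1⟩ }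
      haveI : DecidableRel G'.Adj := Classical.decRel _
      have hle : G' ≤ H := fun a b hab => hab.1
      have hg' : (2 * δ + 1 : ℕ∞) ≤ G'.egirth :=
        le_trans hgirth (SimpleGraph.egirth_anti hle)
      set d : ℕ := ⌊D⌋₊ + 1 with hd
      have hfl2 : 2 ≤ ⌊D⌋₊ := Nat.le_floor (by exact_mod_cast hD2)
      have hdeg : ∀ a ∈ S, d ≤ G'.degree a := by
        intro a ha
        have hsub : S.filter (H.Adj a) ⊆ G'.neighborFinset a := by
          intro w hw
          rw [SimpleGraph.mem_neighborFinset]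
          rw [Finset.mem_filter] at hw
          exact ⟨hw.2, ha, hw.1⟩
        have hlt := hS a ha
        have hcardle := Finset.card_le_card hsub
        have hfloor : ⌊D⌋₊ < (S.filter (H.Adj a)).card := (Nat.floor_lt hD0).mpr hlt
        rw [← SimpleGraph.card_neighborFinset_eq_degree]
        omega
      obtain ⟨v₀, hv₀S⟩ := hSne
      have hcore := GirthSparsityAux.girth_core G' δ d hδ (by omega) hg' v₀
        (fun a b hab => hdeg a hab.2.1) (hdeg v₀ hv₀S)
      have hpow1 : (d - 1) ^ δ ≤ d * (d - 1) ^ (δ - 1) := by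
        have hsplit : (d - 1) ^ δ = (d - 1) * (d - 1) ^ (δ - 1) := by
          conv_lhs => rw [show δ = (δ - 1) + 1 by omega]
          ring
        rw [hsplit]
        exact Nat.mul_le_mul_right _ (by omega)
      have hnn : (d - 1) ^ δ ≤ Fintype.card V := le_trans hpow1 hcore
      have hd1 : (d - 1 : ℕ) = ⌊D⌋₊ := by omega
      have hlt2 : x < ((d - 1 : ℕ) : ℝ) := by
        rw [hd1]
        have hfl := Nat.lt_floor_add_one D
        rw [hD] at hfl
        nlinarith [hnr1]
      have hxnn : (0 : ℝ) ≤ x := by linarith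
      have hppow : x ^ δ < ((d - 1 : ℕ) : ℝ) ^ δ :=
        pow_lt_pow_left₀ hlt2 hxnn (by omega)
      have hid : x ^ δ = (Fintype.card V : ℝ) := by
        rw [hx, ← Real.rpow_natCast ((Fintype.card V : ℝ) ^ ((1 : ℝ) / δ)) δ,
          ← Real.rpow_mul (Nat.cast_nonneg _)]
        have hone : (1 : ℝ) / (δ : ℝ) * (δ : ℝ) = 1 := by field_simp
        rw [hone, Real.rpow_one]
      have hfinal : (Fintype.card V : ℝ) < (Fintype.card V : ℝ) := by
        calc (Fintype.card V : ℝ) = x ^ δ := hid.symm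
          _ < ((d - 1 : ℕ) : ℝ) ^ δ := hppow
          _ ≤ (Fintype.card V : ℝ) := by exact_mod_cast hnn
      exact lt_irrefl _ hfinal
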